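/- For all real constants C > 0 and γ > 2 there exists a constant K > 0 (depending only on C and γ) such that the following holds: for every finite simple undirected connected graph G=(V,E) with |V| ≥ 2 and diameter Δ, and every ρ ∈ (0,1], if |{v ∈ V : d(v) = k}| ≤ C·|V|/k^γ for every positive integer k, then there exists a seed set S ⊆ V with |S| ≤ K·⌈ρ^{γ−1}·|V|⌉ such that S ⊆ Active^{(1)}(S,G,ρ) and Active^{(Δ)}(S,G,ρ) = V. -/

import Mathlib

open Real Finset

/-- One round of the synchronous reversible cascade on an undirected graph:
`ractive G ρ S k` is the set of active vertices in round `k`, starting from seed set `S`. -/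
def ractive {V : Type*} (G : SimpleGraph V) (ρ : ℝ) (S : Set V) : ℕ → Set V
  | 0 => S
  | k + 1 =>
      {v | 0 < (G.neighborSet v).ncard ∧
        ρ * (G.neighborSet v).ncard ≤ ((G.neighborSet v ∩ ractive G ρ S k).ncard : ℝ)} ∪
      {v | v ∈ S ∧ (G.neighborSet v).ncard = 0}

/-- `minSeed G ρ k` is the minimum number of seeds activating all vertices in round `k`. -/
noncomputable def minSeed {V : Type*} (G : SimpleGraph V) (ρ : ℝ) (k : ℕ) : ℕ :=
  sInf {m | ∃ S : Set V, S.ncard = m ∧ ractive G ρ S k = Set.univ}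

lemma ractive_succ {V : Type*} (G : SimpleGraph V) (ρ : ℝ) (S : Set V) (k : ℕ) :
    ractive G ρ S (k+1) =
      {v | 0 < (G.neighborSet v).ncard ∧
        ρ * (G.neighborSet v).ncard ≤ ((G.neighborSet v ∩ ractive G ρ S k).ncard : ℝ)} ∪
      {v | v ∈ S ∧ (G.neighborSet v).ncard = 0} := rfl

lemma mem_ractive_succ {V : Type*} (G : SimpleGraph V) (ρ : ℝ) (S : Set V) (k : ℕ) {v : V}
    (h1 : 0 < (G.neighborSet v).ncard)
    (h2 : ρ * (G.neighborSet v).ncard ≤ ((G.neighborSet v ∩ ractive G ρ S k).ncard : ℝ)) :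
    v ∈ ractive G ρ S (k+1) := Or.inl ⟨h1, h2⟩

lemma mem_ractive_one {V : Type*} (G : SimpleGraph V) (ρ : ℝ) (S : Set V) {v : V}
    (h1 : 0 < (G.neighborSet v).ncard)
    (h2 : ρ * (G.neighborSet v).ncard ≤ ((G.neighborSet v ∩ S).ncard : ℝ)) :
    v ∈ ractive G ρ S 1 := Or.inl ⟨h1, h2⟩

lemma ractive_mono {V : Type*} [Fintype V] (G : SimpleGraph V) (ρ : ℝ) (S : Set V)
    (h : S ⊆ ractive G ρ S 1) : ∀ k, ractive G ρ S k ⊆ ractive G ρ S (k+1) := by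
  intro k
  induction k with
  | zero => exact h
  | succ k ih =>
    rw [ractive_succ, ractive_succ]
    intro v hv
    rcases hv with h1 | h2
    · left
      refine ⟨h1.1, h1.2.trans ?_⟩
      exact_mod_cast Nat.cast_le.mpr (Set.ncard_le_ncard
        (Set.inter_subset_inter_right _ ih) (Set.toFinite _))
    · right; exact h2

lemma ractive_le_of_le {V : Type*} [Fintype V] (G : SimpleGraph V) (ρ : ℝ) (S : Set V)
    (h : S ⊆ ractive G ρ S 1) {k m : ℕ} (hkm : k ≤ m) :
    ractive G ρ S k ⊆ ractive G ρ S m := by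
  induction m with
  | zero => rw [Nat.le_zero] at hkm; subst hkm; exact subset_rfl
  | succ m ih =>
    rcases Nat.le_succ_iff.mp hkm with h' | h'
    · exact (ih h').trans (ractive_mono G ρ S h m)
    · subst h'; exact subset_rfl

lemma seed_subset_ractive {V : Type*} [Fintype V] (G : SimpleGraph V) (ρ : ℝ) (S : Set V)
    (h : S ⊆ ractive G ρ S 1) (k : ℕ) : S ⊆ ractive G ρ S k :=
  ractive_le_of_le G ρ S h (Nat.zero_le k)

lemma ncard_biUnion_le {α ι : Type*} [Fintype α] (t : Finset ι) (f : ι → Set α) :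
    (⋃ i ∈ t, f i).ncard ≤ ∑ i ∈ t, (f i).ncard := by
  classical
  induction t using Finset.induction with
  | empty => simp
  | @insert a s h ih =>
    rw [Finset.sum_insert h]
    calc (⋃ i ∈ insert a s, f i).ncard = (f a ∪ ⋃ i ∈ s, f i).ncard := by
          rw [Finset.set_biUnion_insert]
      _ ≤ (f a).ncard + (⋃ i ∈ s, f i).ncard := Set.ncard_union_le _ _
      _ ≤ (f a).ncard + ∑ i ∈ s, (f i).ncard := by omega

lemma key_ineq (γ : ℝ) (hγ : 2 < γ) {a : ℝ} (ha : 1 ≤ a) :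
    (γ - 2) * (a+1) ^ (1-γ) ≤ a ^ (2-γ) - (a+1) ^ (2-γ) := by
  have ha0 : 0 < a := by linarith
  have hb0 : 0 < a + 1 := by linarith
  set s : ℝ := γ - 2 with hs
  have hs0 : 0 < s := by simp [hs]; linarith
  have hlog : 1/(a+1) ≤ Real.log ((a+1)/a) := by
    have h1 : Real.log (a/(a+1)) ≤ a/(a+1) - 1 := Real.log_le_sub_one_of_pos (by positivity)
    have h2 : Real.log ((a+1)/a) = - Real.log (a/(a+1)) := by
      rw [← Real.log_inv]
      congr 1
      field_simp
    have h3 : a/(a+1) - 1 = -(1/(a+1)) := by field_simp; ring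
    rw [h2]; linarith
  have hA : 0 < a ^ s := Real.rpow_pos_of_pos ha0 s
  have hB : 0 < (a+1) ^ s := Real.rpow_pos_of_pos hb0 s
  have hpow : 1 + s * (1/(a+1)) ≤ (a+1)^s / a^s := by
    have heq : ((a+1)/a) ^ s = Real.exp (Real.log ((a+1)/a) * s) :=
      Real.rpow_def_of_pos (by positivity) s
    have hexp := Real.add_one_le_exp (Real.log ((a+1)/a) * s)
    have hdiv : ((a+1)/a) ^ s = (a+1)^s / a^s := Real.div_rpow hb0.le ha0.le s
    have hmul : s * (1/(a+1)) ≤ Real.log ((a+1)/a) * s := by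
      nlinarith [mul_le_mul_of_nonneg_left hlog hs0.le]
    rw [← hdiv, heq]
    linarith
  have hkey : a^s * (a+1) + s * a^s ≤ (a+1)^s * (a+1) := by
    have h := mul_le_mul_of_nonneg_right hpow (le_of_lt (mul_pos hA hb0))
    have e1 : (1 + s * (1/(a+1))) * (a^s * (a+1)) = a^s * (a+1) + s * a^s := by
      field_simp
    have e2 : (a+1)^s / a^s * (a^s * (a+1)) = (a+1)^s * (a+1) := by
      field_simp
    rw [e1, e2] at h
    exact h
  have e3 : a ^ (2-γ) = (a^s)⁻¹ := by
    rw [show (2-γ) = -s by simp [hs], Real.rpow_neg ha0.le]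
  have e4 : (a+1) ^ (2-γ) = ((a+1)^s)⁻¹ := by
    rw [show (2-γ) = -s by simp [hs], Real.rpow_neg hb0.le]
  have e5 : (a+1) ^ (1-γ) = ((a+1)^s * (a+1))⁻¹ := by
    rw [show (1-γ) = -(s+1) by simp [hs]; ring, Real.rpow_neg hb0.le, Real.rpow_add hb0,
      Real.rpow_one]
  rw [e3, e4, e5]
  rw [inv_eq_one_div, inv_eq_one_div, inv_eq_one_div,
    div_sub_div _ _ (ne_of_gt hA) (ne_of_gt hB), mul_one_div,
    div_le_div_iff₀ (by positivity) (by positivity)]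
  nlinarith [mul_le_mul_of_nonneg_right hkey hB.le]

lemma tail_sum (γ : ℝ) (hγ : 2 < γ) (T : ℕ) (hT : 1 ≤ T) (n : ℕ) :
    (γ - 2) * ∑ k ∈ Finset.Icc (T+1) n, ((k:ℝ)) ^ (1-γ) ≤ (T:ℝ)^(2-γ) := by
  have main : ∀ n : ℕ, (γ - 2) * ∑ k ∈ Finset.Icc (T+1) n, ((k:ℝ)) ^ (1-γ) ≤
      (T:ℝ)^(2-γ) - ((max T n : ℕ):ℝ)^(2-γ) := by
    intro n
    induction n with
    | zero =>
      rw [Finset.Icc_eq_empty (by omega)]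
      simp [max_eq_left (by omega : 0 ≤ T)]
    | succ n ih =>
      by_cases h : T ≤ n
      · have hmax1 : max T n = n := max_eq_right h
        have hmax2 : max T (n+1) = n+1 := max_eq_right (by omega)
        rw [hmax1] at ih
        rw [hmax2]
        have hsplit : Finset.Icc (T+1) (n+1) = insert (n+1) (Finset.Icc (T+1) n) := by
          ext x; simp only [Finset.mem_Icc, Finset.mem_insert]; omega
        rw [hsplit, Finset.sum_insert (by simp)]
        have hkey := key_ineq γ hγ (a := (n:ℝ)) (by exact_mod_cast Nat.one_le_cast.mpr (hT.trans h))
        push_cast at hkey ⊢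
        nlinarith [hkey, ih]
      · rw [Finset.Icc_eq_empty (by omega), max_eq_left (by omega : n+1 ≤ T)]
        simp
  have h2 := main n
  have : (0:ℝ) ≤ ((max T n : ℕ):ℝ)^(2-γ) := by positivity
  linarith

lemma sum_g_le (γ : ℝ) (hγ : 2 < γ) (ρ : ℝ) (hρ0 : 0 < ρ) (hρ1 : ρ ≤ 1) (n : ℕ) :
    ∑ k ∈ Finset.Icc 1 n, (if 1 ≤ ρ * k then ((k:ℝ)) ^ (1-γ) else 0) ≤
      ρ^(γ-2) * (1 + 1/(γ-2)) := by
  have hγ2 : (0:ℝ) < γ - 2 := by linarith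
  set T : ℕ := ⌈1/ρ⌉₊ with hTdef
  have hT1 : 1 ≤ T := Nat.one_le_iff_ne_zero.mpr (by
    simp only [hTdef, ne_eq, Nat.ceil_eq_zero, not_le]
    positivity)
  have hTρ : 1/ρ ≤ (T:ℝ) := Nat.le_ceil _
  have step1 : ∑ k ∈ Finset.Icc 1 n, (if 1 ≤ ρ * k then ((k:ℝ)) ^ (1-γ) else 0) ≤
      ∑ k ∈ Finset.Icc 1 n, (if T ≤ k then ((k:ℝ)) ^ (1-γ) else 0) := by
    apply Finset.sum_le_sum
    intro k hk
    by_cases h : 1 ≤ ρ * k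
    · have hTk : T ≤ k := by
        rw [hTdef]
        apply Nat.ceil_le.mpr
        rw [div_le_iff₀ hρ0]
        nlinarith
      simp [h, hTk]
    · simp only [h, if_false]
      positivity
  have step2 : ∑ k ∈ Finset.Icc 1 n, (if T ≤ k then ((k:ℝ)) ^ (1-γ) else 0) =
      ∑ k ∈ Finset.Icc T n, ((k:ℝ)) ^ (1-γ) := by
    rw [← Finset.sum_filter]
    congr 1
    ext k
    simp only [Finset.mem_filter, Finset.mem_Icc]
    omega
  have hT0 : (0:ℝ) < T := by exact_mod_cast hT1
  have hTb : (T:ℝ)^(2-γ) ≤ ρ^(γ-2) := by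
    have h1 : (T:ℝ)^(2-γ) ≤ (1/ρ)^(2-γ) :=
      Real.rpow_le_rpow_of_nonpos (by positivity) hTρ (by linarith)
    have h2 : (1/ρ)^(2-γ) = ρ^(γ-2) := by
      rw [one_div, Real.inv_rpow hρ0.le, ← Real.rpow_neg hρ0.le]
      congr 1; ring
    rw [← h2]; exact h1
  have hTb1 : (T:ℝ)^(1-γ) ≤ ρ^(γ-2) := by
    refine le_trans ?_ hTb
    exact Real.rpow_le_rpow_of_exponent_le (by exact_mod_cast hT1) (by linarith)
  have step3 : ∑ k ∈ Finset.Icc T n, ((k:ℝ)) ^ (1-γ) ≤ (T:ℝ)^(1-γ) + (T:ℝ)^(2-γ)/(γ-2) := by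
    by_cases hTn : T ≤ n
    · rw [Finset.Icc_eq_cons_Ioc hTn, Finset.sum_cons, ← Finset.Icc_add_one_left_eq_Ioc]
      have h3 : ∑ k ∈ Finset.Icc (T+1) n, ((k:ℝ)) ^ (1-γ) ≤ (T:ℝ)^(2-γ)/(γ-2) := by
        rw [le_div_iff₀ hγ2]
        linarith [tail_sum γ hγ T hT1 n]
      linarith
    · rw [Finset.Icc_eq_empty (by omega)]
      simp
      positivity
  calc ∑ k ∈ Finset.Icc 1 n, (if 1 ≤ ρ * k then ((k:ℝ)) ^ (1-γ) else 0)
      ≤ ∑ k ∈ Finset.Icc T n, ((k:ℝ)) ^ (1-γ) := by rw [← step2]; exact step1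
    _ ≤ (T:ℝ)^(1-γ) + (T:ℝ)^(2-γ)/(γ-2) := step3
    _ ≤ ρ^(γ-2) + ρ^(γ-2)/(γ-2) := by gcongr
    _ = ρ^(γ-2) * (1 + 1/(γ-2)) := by ring

theorem stmt_13 (C γ : ℝ) (hC : 0 < C) (hγ : 2 < γ) :
    ∃ K : ℝ, 0 < K ∧
      ∀ (V : Type) [Fintype V] (G : SimpleGraph V), G.Connected → 2 ≤ Fintype.card V →
        ∀ ρ : ℝ, 0 < ρ → ρ ≤ 1 →
          (∀ k : ℕ, 0 < k →
            ((({v : V | (G.neighborSet v).ncard = k} : Set V).ncard : ℝ) ≤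
              C * (Fintype.card V) / (k : ℝ) ^ γ)) →
          ∃ S : Set V,
            (S.ncard : ℝ) ≤ K * (⌈ρ ^ (γ - 1) * (Fintype.card V : ℝ)⌉ : ℝ) ∧
            S ⊆ ractive G ρ S 1 ∧ ractive G ρ S G.diam = Set.univ := by
  have hγ2 : (0:ℝ) < γ - 2 := by linarith
  refine ⟨2 + 3*C*(1 + 1/(γ-2)), by nlinarith [one_div_pos.mpr hγ2], ?_⟩
  intro V _ G hconn hcard ρ hρ0 hρ1 hdeg
  classical
  set n := Fintype.card V with hn
  have hadj : ∀ v : V, ∃ w, G.Adj v w := by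
    intro v
    obtain ⟨w, hwv⟩ := Fintype.exists_ne_of_one_lt_card (by omega) v
    obtain ⟨p⟩ := hconn.preconnected v w
    cases p with
    | nil => exact absurd rfl hwv
    | cons h q => exact ⟨_, h⟩
  have hdpos : ∀ v : V, 0 < (G.neighborSet v).ncard := by
    intro v
    obtain ⟨w, hw⟩ := hadj v
    exact (Set.ncard_pos (Set.toFinite _)).mpr ⟨w, hw⟩
  have hdle : ∀ v : V, (G.neighborSet v).ncard ≤ n := by
    intro v
    calc (G.neighborSet v).ncard ≤ (Set.univ : Set V).ncard :=
          Set.ncard_le_ncard (Set.subset_univ _) (Set.toFinite _)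
      _ = n := by rw [Set.ncard_univ, Nat.card_eq_fintype_card]
  set H : Set V := {v | 1 ≤ ρ * ((G.neighborSet v).ncard : ℝ)} with hH
  have hAex : ∀ v : V, ∃ t ⊆ G.neighborSet v,
      t.ncard = ⌈ρ * ((G.neighborSet v).ncard : ℝ)⌉₊ := by
    intro v
    apply Set.exists_subset_card_eq
    rw [Nat.ceil_le]
    nlinarith [Nat.cast_nonneg (α := ℝ) (G.neighborSet v).ncard]
  choose A hA hAcard using hAex
  obtain ⟨a⟩ : Nonempty V := Fintype.card_pos_iff.mp (by omega)
  obtain ⟨b, hab⟩ := hadj a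
  set S : Set V := (({a, b} : Set V) ∪ H) ∪ ⋃ v ∈ H, A v with hS
  have haS : a ∈ S := Or.inl (Or.inl (Or.inl rfl))
  have hbS : b ∈ S := Or.inl (Or.inl (Or.inr rfl))
  have hHS : H ⊆ S := fun v hv => Or.inl (Or.inr hv)
  have hAS : ∀ v, v ∈ H → A v ⊆ S := fun v hv x hx =>
    Or.inr (Set.mem_biUnion hv hx)
  have hlow : ∀ v : V, v ∉ H → ρ * ((G.neighborSet v).ncard : ℝ) ≤ 1 := by
    intro v hv
    have h' : ¬ (1 ≤ ρ * ((G.neighborSet v).ncard : ℝ)) := hv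
    linarith [not_le.mp h']
  have hone_H : ∀ v ∈ H, v ∈ ractive G ρ S 1 := by
    intro v hvH
    refine mem_ractive_one G ρ S (hdpos v) ?_
    have h1 : A v ⊆ G.neighborSet v ∩ S := Set.subset_inter (hA v) (hAS v hvH)
    have h2 := Set.ncard_le_ncard h1 (Set.toFinite _)
    rw [hAcard v] at h2
    calc ρ * ((G.neighborSet v).ncard : ℝ)
        ≤ (⌈ρ * ((G.neighborSet v).ncard : ℝ)⌉₊ : ℝ) := Nat.le_ceil _
      _ ≤ _ := by exact_mod_cast h2
  have hone_nb : ∀ v : V, v ∉ H → (∃ u ∈ S, G.Adj v u) → v ∈ ractive G ρ S 1 := by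
    intro v hvH ⟨u, huS, hvu⟩
    refine mem_ractive_one G ρ S (hdpos v) ?_
    refine le_trans (hlow v hvH) ?_
    have h0 : 0 < (G.neighborSet v ∩ S).ncard :=
      (Set.ncard_pos (Set.toFinite _)).mpr ⟨u, hvu, huS⟩
    exact_mod_cast h0
  have hS1 : S ⊆ ractive G ρ S 1 := by
    intro v hv
    by_cases hvH : v ∈ H
    · exact hone_H v hvH
    rcases hv with (hv | hv) | hv
    · rcases hv with rfl | rfl
      · exact hone_nb _ hvH ⟨_, hbS, hab⟩
      · exact hone_nb _ hvH ⟨_, haS, hab.symm⟩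
    · exact absurd hv hvH
    · obtain ⟨w, hwH, hvw⟩ := Set.mem_iUnion₂.mp hv
      exact hone_nb v hvH ⟨w, hHS hwH, (hA w hvw).symm⟩
  have hcov : ∀ k (v : V), G.dist a v ≤ k → v ∈ ractive G ρ S k := by
    intro k
    induction k with
    | zero =>
      intro v hv
      have h0 : a = v := (hconn.dist_eq_zero_iff).mp (Nat.le_zero.mp hv)
      subst h0
      exact haS
    | succ k ih =>
      intro v hv
      by_cases hk : G.dist a v ≤ k
      · exact ractive_mono G ρ S hS1 k (ih v hk)
      · have hd : G.dist v a = k + 1 := by rw [SimpleGraph.dist_comm]; omega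
        obtain ⟨p, hp⟩ := (hconn.preconnected v a).exists_walk_length_eq_dist
        rw [hd] at hp
        cases p with
        | nil => simp at hp
        | cons hvw q =>
          rename_i w
          have hqlen : q.length = k := by simpa using hp
          have hwk : G.dist a w ≤ k := by
            rw [SimpleGraph.dist_comm]
            calc G.dist w a ≤ q.length := SimpleGraph.dist_le q
              _ = k := hqlen
          have hwA := ih w hwk
          by_cases hvH : v ∈ H
          · exact seed_subset_ractive G ρ S hS1 (k+1) (hHS hvH)
          · refine mem_ractive_succ G ρ S k (hdpos v) (le_trans (hlow v hvH) ?_)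
            have h0 : 0 < (G.neighborSet v ∩ ractive G ρ S k).ncard :=
              (Set.ncard_pos (Set.toFinite _)).mpr ⟨w, hvw, hwA⟩
            exact_mod_cast h0
  have hed : G.ediam ≠ ⊤ := by
    haveI : Nonempty V := ⟨a⟩
    obtain ⟨u, w, huw⟩ := G.exists_edist_eq_ediam_of_finite
    rw [← huw, SimpleGraph.edist_ne_top_iff_reachable]
    exact hconn.preconnected u w
  have huniv : ractive G ρ S G.diam = Set.univ :=
    Set.eq_univ_of_forall fun v => hcov G.diam v (SimpleGraph.dist_le_diam hed)
  -- cardinality bound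
  set Ht : Finset V := (Set.toFinite H).toFinset with hHt
  have hmemHt : ∀ v, v ∈ Ht ↔ v ∈ H := fun v => Set.Finite.mem_toFinset _
  have hcard1 : S.ncard ≤ 2 + ∑ v ∈ Ht, (1 + ⌈ρ * ((G.neighborSet v).ncard : ℝ)⌉₊) := by
    have hsub : S ⊆ {a} ∪ ({b} ∪ ⋃ v ∈ Ht, ({v} ∪ A v)) := by
      intro v hv
      rcases hv with (hv | hv) | hv
      · rcases hv with rfl | rfl
        · exact Or.inl rfl
        · exact Or.inr (Or.inl rfl)
      · exact Or.inr (Or.inr (Set.mem_biUnion ((hmemHt v).mpr hv) (Or.inl rfl)))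
      · obtain ⟨w, hwH, hvw⟩ := Set.mem_iUnion₂.mp hv
        exact Or.inr (Or.inr (Set.mem_biUnion ((hmemHt w).mpr hwH) (Or.inr hvw)))
    have hsum_term : ∀ v ∈ Ht, ({v} ∪ A v).ncard ≤ 1 + ⌈ρ * ((G.neighborSet v).ncard : ℝ)⌉₊ := by
      intro v _
      refine le_trans (Set.ncard_union_le _ _) ?_
      rw [Set.ncard_singleton, hAcard v]
    calc S.ncard ≤ ({a} ∪ ({b} ∪ ⋃ v ∈ Ht, ({v} ∪ A v)) : Set V).ncard :=
          Set.ncard_le_ncard hsub (Set.toFinite _)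
      _ ≤ ({a} : Set V).ncard + (({b} ∪ ⋃ v ∈ Ht, ({v} ∪ A v)) : Set V).ncard :=
          Set.ncard_union_le _ _
      _ ≤ ({a} : Set V).ncard + (({b} : Set V).ncard + (⋃ v ∈ Ht, ({v} ∪ A v)).ncard) :=
          Nat.add_le_add_left (Set.ncard_union_le _ _) _
      _ ≤ 1 + (1 + ∑ v ∈ Ht, ({v} ∪ A v).ncard) := by
          rw [Set.ncard_singleton, Set.ncard_singleton]
          exact Nat.add_le_add_left (Nat.add_le_add_left (ncard_biUnion_le Ht _) _) _
      _ ≤ 2 + ∑ v ∈ Ht, (1 + ⌈ρ * ((G.neighborSet v).ncard : ℝ)⌉₊) := by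
          have := Finset.sum_le_sum hsum_term
          omega
  have hterm : ∀ v ∈ Ht, ((1 + ⌈ρ * ((G.neighborSet v).ncard : ℝ)⌉₊ : ℕ) : ℝ) ≤
      3 * (ρ * ((G.neighborSet v).ncard : ℝ)) := by
    intro v hv
    have hvH : 1 ≤ ρ * ((G.neighborSet v).ncard : ℝ) := (hmemHt v).mp hv
    have hceil : (⌈ρ * ((G.neighborSet v).ncard : ℝ)⌉₊ : ℝ) <
        ρ * ((G.neighborSet v).ncard : ℝ) + 1 := Nat.ceil_lt_add_one (by positivity)
    push_cast
    linarith
  have hsum1 : (S.ncard : ℝ) ≤ 2 + 3 * ρ * ∑ v ∈ Ht, ((G.neighborSet v).ncard : ℝ) := by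
    have h1 : (S.ncard : ℝ) ≤ 2 + ∑ v ∈ Ht, ((1 + ⌈ρ * ((G.neighborSet v).ncard : ℝ)⌉₊ : ℕ) : ℝ) := by
      exact_mod_cast hcard1
    have h2 := Finset.sum_le_sum hterm
    have h3 : ∑ v ∈ Ht, 3 * (ρ * ((G.neighborSet v).ncard : ℝ)) =
        3 * ρ * ∑ v ∈ Ht, ((G.neighborSet v).ncard : ℝ) := by
      rw [Finset.mul_sum]
      exact Finset.sum_congr rfl fun v _ => by ring
    linarith
  have hfib : ∑ v ∈ Ht, ((G.neighborSet v).ncard : ℝ) ≤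
      C * n * ∑ k ∈ Finset.Icc 1 n, (if 1 ≤ ρ * k then ((k:ℝ)) ^ (1-γ) else 0) := by
    have hmaps : ∀ v ∈ Ht, (G.neighborSet v).ncard ∈ Finset.Icc 1 n := by
      intro v _
      rw [Finset.mem_Icc]
      exact ⟨hdpos v, hdle v⟩
    rw [← Finset.sum_fiberwise_of_maps_to hmaps (fun v => ((G.neighborSet v).ncard : ℝ)),
      Finset.mul_sum]
    apply Finset.sum_le_sum
    intro k hk
    rw [Finset.mem_Icc] at hk
    by_cases hgk : 1 ≤ ρ * (k:ℝ)
    · rw [if_pos hgk]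
      have hinner : ∑ v ∈ Ht.filter (fun v => (G.neighborSet v).ncard = k),
          ((G.neighborSet v).ncard : ℝ)
          = ((Ht.filter (fun v => (G.neighborSet v).ncard = k)).card : ℝ) * k := by
        rw [Finset.sum_congr rfl (fun v hv => by rw [(Finset.mem_filter.mp hv).2]),
          Finset.sum_const, nsmul_eq_mul]
      rw [hinner]
      have hcount : ((Ht.filter (fun v => (G.neighborSet v).ncard = k)).card : ℝ) ≤
          C * n / (k:ℝ)^γ := by
        refine le_trans ?_ (hdeg k hk.1)
        have hsub : ↑(Ht.filter (fun v => (G.neighborSet v).ncard = k)) ⊆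
            {v : V | (G.neighborSet v).ncard = k} := by
          intro v hv
          exact (Finset.mem_filter.mp (Finset.mem_coe.mp hv)).2
        have h5 := Set.ncard_le_ncard hsub (Set.toFinite _)
        rw [Set.ncard_coe_finset] at h5
        exact_mod_cast h5
      have hk0 : (0:ℝ) < k := by exact_mod_cast hk.1
      have hpow : C * (n:ℝ) * (k:ℝ)^(1-γ) = (C * n / (k:ℝ)^γ) * k := by
        rw [show (1-γ) = 1 + -γ by ring, Real.rpow_add hk0, Real.rpow_one,
          Real.rpow_neg hk0.le]
        have hkγ : (0:ℝ) < (k:ℝ)^γ := Real.rpow_pos_of_pos hk0 γ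
        field_simp
      rw [hpow]
      exact mul_le_mul_of_nonneg_right hcount hk0.le
    · rw [if_neg hgk, mul_zero]
      apply le_of_eq
      apply Finset.sum_eq_zero
      intro v hv
      exfalso
      obtain ⟨hvt, hvk⟩ := Finset.mem_filter.mp hv
      have h6 : 1 ≤ ρ * ((G.neighborSet v).ncard : ℝ) := (hmemHt v).mp hvt
      rw [hvk] at h6
      exact hgk h6
  have hB := sum_g_le γ hγ ρ hρ0 hρ1 n
  set x : ℝ := ρ^(γ-1) * n with hx
  have hn0 : (0:ℝ) < n := by
    have : 0 < n := by omega
    exact_mod_cast this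
  have hx0 : 0 < x := by
    rw [hx]
    positivity
  have hceil1 : (1:ℝ) ≤ (⌈x⌉:ℝ) := by
    have : (1:ℤ) ≤ ⌈x⌉ := Int.ceil_pos.mpr hx0
    exact_mod_cast this
  have hceilx : x ≤ (⌈x⌉:ℝ) := Int.le_ceil x
  have hρ2 : ρ * ρ^(γ-2) = ρ^(γ-1) := by
    rw [show γ-1 = 1+(γ-2) by ring, Real.rpow_add hρ0, Real.rpow_one]
  have hcombine : (S.ncard:ℝ) ≤ 2 + 3*C*(1+1/(γ-2)) * x := by
    have hsumnn : (0:ℝ) ≤ ∑ k ∈ Finset.Icc 1 n, (if 1 ≤ ρ * k then ((k:ℝ)) ^ (1-γ) else 0) := by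
      apply Finset.sum_nonneg
      intro k _
      by_cases h : 1 ≤ ρ * (k:ℝ)
      · rw [if_pos h]; positivity
      · rw [if_neg h]
    have h7 : ∑ v ∈ Ht, ((G.neighborSet v).ncard : ℝ) ≤ C * n * (ρ^(γ-2) * (1+1/(γ-2))) := by
      refine hfib.trans ?_
      exact mul_le_mul_of_nonneg_left hB (by positivity)
    have h8 : 3 * ρ * ∑ v ∈ Ht, ((G.neighborSet v).ncard : ℝ) ≤
        3 * ρ * (C * n * (ρ^(γ-2) * (1+1/(γ-2)))) :=
      mul_le_mul_of_nonneg_left h7 (by positivity)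
    have h9 : 3 * ρ * (C * n * (ρ^(γ-2) * (1+1/(γ-2)))) = 3*C*(1+1/(γ-2)) * x := by
      rw [hx, ← hρ2]
      ring
    rw [h9] at h8
    linarith
  refine ⟨S, ?_, hS1, huniv⟩
  have hKpos : (0:ℝ) < 3*C*(1+1/(γ-2)) := by nlinarith [one_div_pos.mpr hγ2]
  calc (S.ncard:ℝ) ≤ 2 + 3*C*(1+1/(γ-2)) * x := hcombine
    _ ≤ 2*(⌈x⌉:ℝ) + 3*C*(1+1/(γ-2)) * (⌈x⌉:ℝ) := by nlinarith
    _ = (2 + 3*C*(1 + 1/(γ-2))) * (⌈x⌉:ℝ) := by ring
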